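/- Fix integers r ≥ 2 and s with 1 ≤ s ≤ r, complex numbers S_1, …, S_r, and a nonzero complex number z. Then det( z^{s−r}·Id − F(z) ) = Σ_{j=1}^{r} (−1)^j S_j z^{r(s−r) − s·j}. -/

import Mathlib

open Finset Matrix

/-- `⌊α_k⌋ = ⌊k(r−s)/r⌋`. -/
noncomputable def alphaFloor (r s k : ℕ) : ℤ :=
  ⌊((k : ℚ) * ((r : ℚ) - (s : ℚ))) / (r : ℚ)⌋

/-- The shifted matrix `F(z)` of the `(r,s)` quantum curve:
`F(z)_{1,j} = (−1)^{j−1} S_j z^{r(⌊α_r⌋ − ⌊α_{r+1−j}⌋ − j)}` for `1 ≤ j ≤ r−1`,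
`F(z)_{1,r} = (−1)^{r−1} S_r z^{r(⌊α_r⌋ − ⌊α_1⌋ − r)} + z^{−r⌊α_1⌋}`,
`F(z)_{k+1,k} = z^{r(⌊α_{r−k}⌋ − ⌊α_{r+1−k}⌋)}` for `1 ≤ k ≤ r−1`,
all other entries `0` (indices `0`-based in Lean, so `S j` is `S_{j+1}`). -/
noncomputable def shiftedF (r s : ℕ) (S : Fin r → ℂ) (z : ℂ) : Matrix (Fin r) (Fin r) ℂ :=
  Matrix.of fun i j =>
    (if (i : ℕ) = 0 then
        (-1 : ℂ) ^ (j : ℕ) * S j *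
            z ^ ((r : ℤ) * (alphaFloor r s r - alphaFloor r s (r - (j : ℕ)) - ((j : ℕ) + 1)))
          + (if (j : ℕ) = r - 1 then z ^ (-(r : ℤ) * alphaFloor r s 1) else 0)
      else 0)
    + (if (j : ℕ) + 1 = (i : ℕ) then
        z ^ ((r : ℤ) * (alphaFloor r s (r - (i : ℕ)) - alphaFloor r s (r + 1 - (i : ℕ))))
      else 0)

/-- `det(z^{s−r}·Id − F(z)) = Σ_{j=1}^r (−1)^j S_j z^{r(s−r) − s·j}`. -/
def hessM {R : Type*} [CommRing R] (n : ℕ) (c : Fin (n+1) → R) (d : R) (e : ℕ → R) :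
    Matrix (Fin (n+1)) (Fin (n+1)) R :=
  Matrix.of fun i j =>
    if (i:ℕ) = 0 then c j
    else if (i:ℕ) = (j:ℕ) then d
    else if (j:ℕ) + 1 = (i:ℕ) then e (j:ℕ) else 0

theorem hess_det {R : Type*} [CommRing R] :
    ∀ (n : ℕ) (c : Fin (n+1) → R) (d : R) (e : ℕ → R),
    (hessM n c d e).det
      = ∑ j : Fin (n+1), (-1:R)^(j:ℕ) * c j * (∏ k ∈ Finset.range (j:ℕ), e k) * d^(n - (j:ℕ)) := by
  intro n
  induction n with
  | zero =>
    intro c d e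
    simp [hessM, Matrix.det_fin_one]
  | succ n ih =>
    intro c d e
    rw [Matrix.det_succ_column_zero, Fin.sum_univ_succ, Fin.sum_univ_succ]
    have h0 : ∀ i : Fin n, hessM (n+1) c d e i.succ.succ 0 = 0 := by
      intro i
      simp only [hessM, Matrix.of_apply, Fin.val_succ, Fin.val_zero]
      have : (i:ℕ) + 1 + 1 ≠ 0 := by omega
      simp
    have hrest : (∑ i : Fin n, (-1:R)^((i.succ.succ : Fin (n+2)):ℕ) *
        hessM (n+1) c d e i.succ.succ 0 *
        ((hessM (n+1) c d e).submatrix i.succ.succ.succAbove Fin.succ).det) = 0 := by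
      apply Finset.sum_eq_zero
      intro i _
      rw [h0 i]; ring
    rw [hrest, add_zero]
    -- minor at (0,0): lower triangular with diagonal d
    have hminor0 : ((hessM (n+1) c d e).submatrix (0 : Fin (n+2)).succAbove Fin.succ).det
        = d ^ (n+1) := by
      rw [Matrix.det_of_lowerTriangular]
      · rw [show (∏ i : Fin (n+1), ((hessM (n+1) c d e).submatrix
            (0 : Fin (n+2)).succAbove Fin.succ) i i) = ∏ _i : Fin (n+1), d from ?_]
        · simp
        · apply Finset.prod_congr rfl
          intro i _
          simp [hessM, Fin.succAbove_zero]
      · intro i j hij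
        simp only [Matrix.submatrix_apply, Fin.succAbove_zero, hessM, Matrix.of_apply,
          Fin.val_succ]
        have hij' : (i:ℕ) < (j:ℕ) := hij
        rw [if_neg (by omega), if_neg (by omega), if_neg (by omega)]
    -- minor at (1,0): hessM n (c ∘ succ) d (e ∘ (·+1))
    have hminor1 : ((hessM (n+1) c d e).submatrix (1 : Fin (n+2)).succAbove Fin.succ)
        = hessM n (fun j => c j.succ) d (fun k => e (k+1)) := by
      ext i j
      have hsa : (((1 : Fin (n+2)).succAbove i : Fin (n+2)) : ℕ)
          = if (i:ℕ) < 1 then (i:ℕ) else (i:ℕ)+1 := by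
        rw [Fin.succAbove]
        split_ifs with h1 h2 h3
        · simp
        · rw [Fin.lt_def, Fin.coe_castSucc, Fin.val_one] at h1; omega
        · rw [Fin.lt_def, Fin.coe_castSucc, Fin.val_one] at h1; omega
        · simp
      by_cases hi0 : (i:ℕ) = 0
      · have : (1 : Fin (n+2)).succAbove i = 0 := by
          apply Fin.ext; rw [hsa]; simp [hi0]
        simp [this, hessM, hi0, Matrix.submatrix_apply]
        exact fun h => absurd (Fin.ext (by simp [hi0])) h
      · have hv : (((1 : Fin (n+2)).succAbove i : Fin (n+2)) : ℕ) = (i:ℕ)+1 := by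
          rw [hsa, if_neg (by omega)]
        simp only [Matrix.submatrix_apply, hessM, Matrix.of_apply, hv, Fin.val_succ]
        rw [if_neg (by omega), if_neg hi0]
        by_cases hij : (i:ℕ) = (j:ℕ)
        · rw [if_pos (by omega), if_pos hij]
        · rw [if_neg (by omega), if_neg hij]
          by_cases hij2 : (j:ℕ)+1 = (i:ℕ)
          · rw [if_pos (by omega), if_pos hij2]
          · rw [if_neg (by omega), if_neg hij2]
    have e00 : hessM (n+1) c d e 0 0 = c 0 := by simp [hessM]
    have e10 : hessM (n+1) c d e 1 0 = e 0 := by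
      simp only [hessM, Matrix.of_apply, Fin.val_one, Fin.val_zero]
      norm_num
    rw [Fin.succ_zero_eq_one, hminor0, hminor1, ih, e00, e10]
    have hR : (∑ j : Fin (n+1+1), ((-1:R)^(j:ℕ) * c j * ∏ k ∈ Finset.range (j:ℕ), e k)
          * d^(n+1-(j:ℕ)))
        = (-1:R)^((0:Fin (n+2)):ℕ) * c 0 * d^(n+1)
          + (-1:R)^((1:Fin (n+2)):ℕ) * e 0 * ∑ j : Fin (n+1),
              ((-1:R)^(j:ℕ) * c j.succ * ∏ k ∈ Finset.range (j:ℕ), e (k+1)) * d^(n-(j:ℕ)) := by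
      rw [Fin.sum_univ_succ, Finset.mul_sum]
      simp only [Fin.val_zero, Fin.val_succ, Fin.val_one, pow_zero, pow_one, one_mul,
        Finset.range_zero, Finset.prod_empty, mul_one, Nat.sub_zero]
      congr 1
      apply Finset.sum_congr rfl
      intro j _
      rw [Finset.prod_range_succ']
      rw [show n + 1 - ((j:ℕ)+1) = n - (j:ℕ) from by omega]
      ring
    rw [hR]

lemma zpow_pow_aux (z : ℂ) (hz : z ≠ 0) (a : ℤ) (m : ℕ) : (z ^ a) ^ m = z ^ (a * m) := by
  induction m with
  | zero => simp
  | succ m ih =>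
    rw [pow_succ, ih, ← zpow_add₀ hz]
    congr 1
    push_cast
    ring

lemma alphaFloor_last (r s : ℕ) (hr : 0 < r) : alphaFloor r s r = (r:ℤ) - s := by
  unfold alphaFloor
  rw [mul_div_cancel_left₀ _ (show (r:ℚ) ≠ 0 by exact_mod_cast hr.ne')]
  rw [show (r:ℚ) - (s:ℚ) = (((r:ℤ) - (s:ℤ) : ℤ) : ℚ) by push_cast; ring]
  exact Int.floor_intCast _

theorem stmt9 (r s : ℕ) (hr : 2 ≤ r) (hs1 : 1 ≤ s) (hsr : s ≤ r)
    (S : Fin r → ℂ) (z : ℂ) (hz : z ≠ 0) :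
    (z ^ ((s : ℤ) - (r : ℤ)) • (1 : Matrix (Fin r) (Fin r) ℂ) - shiftedF r s S z).det
      = ∑ j : Fin r, (-1 : ℂ) ^ ((j : ℕ) + 1) * S j *
          z ^ ((r : ℤ) * ((s : ℤ) - (r : ℤ)) - (s : ℤ) * (((j : ℕ) : ℤ) + 1)) := by
  obtain ⟨n, rfl⟩ : ∃ n, r = n + 1 := ⟨r - 1, by omega⟩
  have hn1 : 1 ≤ n := by omega
  set A : ℕ → ℤ := alphaFloor (n+1) s with hA
  have hAr : A (n+1) = ((n+1:ℕ):ℤ) - s := alphaFloor_last (n+1) s (Nat.succ_pos n)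
  set d : ℂ := z ^ ((s:ℤ) - ((n+1:ℕ):ℤ)) with hd
  set T : Fin (n+1) → ℂ := fun j =>
    (-1:ℂ)^(j:ℕ) * S j * z ^ (((n+1:ℕ):ℤ) * (A (n+1) - A (n+1 - (j:ℕ)) - ((j:ℕ)+1))) with hT
  set c : Fin (n+1) → ℂ := fun j =>
    (if (j:ℕ) = 0 then d else 0)
      - (T j + if (j:ℕ) = n then z ^ (-((n+1:ℕ):ℤ) * A 1) else 0) with hc
  set e : ℕ → ℂ := fun k => -z ^ (((n+1:ℕ):ℤ) * (A (n - k) - A (n + 1 - k))) with he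
  have hM : z ^ ((s:ℤ) - ((n+1:ℕ):ℤ)) • (1 : Matrix (Fin (n+1)) (Fin (n+1)) ℂ)
      - shiftedF (n+1) s S z = hessM n c d e := by
    ext i j
    simp only [Matrix.sub_apply, Matrix.smul_apply, Matrix.one_apply, shiftedF,
      Matrix.of_apply, hessM, smul_eq_mul, Fin.ext_iff, hc, hT, he, hA,
      Nat.add_sub_cancel]
    by_cases hi : (i:ℕ) = 0
    · rw [if_pos hi, if_pos hi, if_neg (show ¬((j:ℕ)+1 = (i:ℕ)) by omega), add_zero]
      by_cases hj0 : (j:ℕ) = 0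
      · rw [if_pos hj0, if_pos (show (i:ℕ) = (j:ℕ) by omega), mul_one]
      · rw [if_neg hj0, if_neg (show ¬((i:ℕ) = (j:ℕ)) by omega), mul_zero]
    · rw [if_neg hi, if_neg hi, zero_add]
      by_cases hij : (i:ℕ) = (j:ℕ)
      · rw [if_pos hij, if_pos hij, if_neg (show ¬((j:ℕ)+1 = (i:ℕ)) by omega),
          mul_one, sub_zero]
      · rw [if_neg hij, if_neg hij, mul_zero]
        by_cases hsub : (j:ℕ)+1 = (i:ℕ)
        · rw [if_pos hsub, if_pos hsub, zero_sub]
          rw [show n + 1 - (i:ℕ) = n - (j:ℕ) by omega,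
            show n + 1 + 1 - (i:ℕ) = n + 1 - (j:ℕ) by omega]
        · rw [if_neg hsub, if_neg hsub, sub_zero]
  rw [hM, hess_det]
  -- product of subdiagonal entries
  have hP : ∀ m : ℕ, (∏ k ∈ Finset.range m, e k)
      = (-1:ℂ)^m * z ^ (((n+1:ℕ):ℤ) * (A (n+1-m) - A (n+1))) := by
    intro m
    induction m with
    | zero => simp
    | succ m ih =>
      rw [Finset.prod_range_succ, ih, he]
      simp only
      rw [show n + 1 - (m+1) = n - m by omega]
      rw [show ((-1:ℂ)^m * z ^ (((n+1:ℕ):ℤ) * (A (n+1-m) - A (n+1))))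
            * (-z ^ (((n+1:ℕ):ℤ) * (A (n - m) - A (n + 1 - m))))
          = (-1:ℂ)^(m+1) * (z ^ (((n+1:ℕ):ℤ) * (A (n+1-m) - A (n+1)))
            * z ^ (((n+1:ℕ):ℤ) * (A (n - m) - A (n + 1 - m)))) by ring]
      rw [← zpow_add₀ hz]
      congr 2
      ring
  have hdp : ∀ m : ℕ, d ^ m = z ^ (((s:ℤ) - ((n+1:ℕ):ℤ)) * m) := fun m => zpow_pow_aux z hz _ m
  rw [← sub_eq_zero, ← Finset.sum_sub_distrib]
  have key : ∀ j : Fin (n+1),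
      ((-1:ℂ)^(j:ℕ) * c j * (∏ k ∈ Finset.range (j:ℕ), e k) * d^(n - (j:ℕ)))
        - (-1 : ℂ) ^ ((j : ℕ) + 1) * S j *
            z ^ (((n+1:ℕ) : ℤ) * ((s : ℤ) - ((n+1:ℕ) : ℤ)) - (s : ℤ) * (((j : ℕ) : ℤ) + 1))
      = (if (j:ℕ) = 0 then z ^ (((n+1:ℕ):ℤ) * ((s:ℤ) - ((n+1:ℕ):ℤ))) else 0)
        - (if (j:ℕ) = n then z ^ (((n+1:ℕ):ℤ) * ((s:ℤ) - ((n+1:ℕ):ℤ))) else 0) := by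
    intro j
    have hjn : (j:ℕ) ≤ n := by omega
    have hcast : ((n - (j:ℕ) : ℕ) : ℤ) = (n:ℤ) - ((j:ℕ):ℤ) := by
      rw [Nat.cast_sub hjn]
    have hmid : (-1:ℂ)^(j:ℕ) * T j * (∏ k ∈ Finset.range (j:ℕ), e k) * d^(n - (j:ℕ))
        = (-1 : ℂ) ^ ((j : ℕ)) * S j *
            z ^ (((n+1:ℕ) : ℤ) * ((s : ℤ) - ((n+1:ℕ) : ℤ)) - (s : ℤ) * (((j : ℕ) : ℤ) + 1)) := by
      rw [hP, hdp, hT]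
      simp only
      rw [show ((-1:ℂ)^(j:ℕ)) * ((-1:ℂ)^(j:ℕ) * S j
            * z ^ (((n+1:ℕ):ℤ) * (A (n+1) - A (n+1 - (j:ℕ)) - ((j:ℕ)+1))))
          * ((-1:ℂ)^(j:ℕ) * z ^ (((n+1:ℕ):ℤ) * (A (n+1-(j:ℕ)) - A (n+1))))
          * z ^ (((s:ℤ) - ((n+1:ℕ):ℤ)) * ((n - (j:ℕ) : ℕ) : ℤ))
        = (((-1:ℂ)^(j:ℕ) * (-1:ℂ)^(j:ℕ)) * ((-1:ℂ)^(j:ℕ) * S j))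
          * (z ^ (((n+1:ℕ):ℤ) * (A (n+1) - A (n+1 - (j:ℕ)) - ((j:ℕ)+1)))
            * z ^ (((n+1:ℕ):ℤ) * (A (n+1-(j:ℕ)) - A (n+1)))
            * z ^ (((s:ℤ) - ((n+1:ℕ):ℤ)) * ((n - (j:ℕ) : ℕ) : ℤ))) by ring]
      rw [show ((-1:ℂ)^(j:ℕ)) * ((-1:ℂ)^(j:ℕ)) = 1 by
        rw [← pow_add]; exact Even.neg_one_pow ⟨(j:ℕ), by ring⟩, one_mul]
      rw [← zpow_add₀ hz, ← zpow_add₀ hz]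
      congr 1
      rw [hcast]
      push_cast
      ring
    rw [hc]
    simp only
    rw [show (-1:ℂ)^(j:ℕ) * ((if (j:ℕ) = 0 then d else 0)
          - (T j + if (j:ℕ) = n then z ^ (-((n+1:ℕ):ℤ) * A 1) else 0))
        * (∏ k ∈ Finset.range (j:ℕ), e k) * d^(n - (j:ℕ))
      = (-1:ℂ)^(j:ℕ) * (if (j:ℕ) = 0 then d else 0)
          * (∏ k ∈ Finset.range (j:ℕ), e k) * d^(n - (j:ℕ))
        - (-1:ℂ)^(j:ℕ) * T j * (∏ k ∈ Finset.range (j:ℕ), e k) * d^(n - (j:ℕ))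
        - (-1:ℂ)^(j:ℕ) * (if (j:ℕ) = n then z ^ (-((n+1:ℕ):ℤ) * A 1) else 0)
          * (∏ k ∈ Finset.range (j:ℕ), e k) * d^(n - (j:ℕ)) by ring]
    rw [hmid]
    by_cases hj0 : (j:ℕ) = 0
    · have hjn' : ¬((j:ℕ) = n) := by omega
      rw [if_pos hj0, if_pos hj0, if_neg hjn', if_neg hjn']
      rw [hj0]
      simp only [pow_zero, one_mul, Finset.range_zero, Finset.prod_empty, mul_one,
        Nat.sub_zero, mul_zero, zero_mul, sub_zero]
      have hX : d * d ^ n = z ^ (((n+1:ℕ):ℤ) * ((s:ℤ) - ((n+1:ℕ):ℤ))) := by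
        rw [hdp n, hd, ← zpow_add₀ hz]
        congr 1
        push_cast
        ring
      rw [Nat.cast_zero]
      linear_combination hX
    · rw [if_neg hj0, if_neg hj0]
      by_cases hjl : (j:ℕ) = n
      · rw [if_pos hjl, if_pos hjl]
        rw [hjl, hP]
        rw [show n - n = 0 by omega, show n + 1 - n = 1 by omega]
        simp only [pow_zero, mul_one, mul_zero, zero_mul, zero_sub]
        have hY : (-1:ℂ)^n * z ^ (-((n+1:ℕ):ℤ) * A 1)
              * ((-1:ℂ)^n * z ^ (((n+1:ℕ):ℤ) * (A 1 - A (n+1))))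
            = z ^ (((n+1:ℕ):ℤ) * ((s:ℤ) - ((n+1:ℕ):ℤ))) := by
          rw [show (-1:ℂ)^n * z ^ (-((n+1:ℕ):ℤ) * A 1)
                * ((-1:ℂ)^n * z ^ (((n+1:ℕ):ℤ) * (A 1 - A (n+1))))
              = ((-1:ℂ)^n * (-1:ℂ)^n)
                * (z ^ (-((n+1:ℕ):ℤ) * A 1) * z ^ (((n+1:ℕ):ℤ) * (A 1 - A (n+1)))) by ring]
          rw [show ((-1:ℂ)^n) * ((-1:ℂ)^n) = 1 by
            rw [← pow_add]; exact Even.neg_one_pow ⟨n, by ring⟩, one_mul]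
          rw [← zpow_add₀ hz]
          congr 1
          rw [hAr]
          push_cast
          ring
        linear_combination -hY
      · rw [if_neg hjl, if_neg hjl]
        simp only [mul_zero, zero_mul, sub_zero, zero_sub]
        ring
  calc (∑ j : Fin (n+1),
        (((-1:ℂ)^(j:ℕ) * c j * (∏ k ∈ Finset.range (j:ℕ), e k) * d^(n - (j:ℕ)))
          - (-1 : ℂ) ^ ((j : ℕ) + 1) * S j *
              z ^ (((n+1:ℕ) : ℤ) * ((s : ℤ) - ((n+1:ℕ) : ℤ)) - (s : ℤ) * (((j : ℕ) : ℤ) + 1))))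
      = ∑ j : Fin (n+1),
          ((if (j:ℕ) = 0 then z ^ (((n+1:ℕ):ℤ) * ((s:ℤ) - ((n+1:ℕ):ℤ))) else 0)
            - (if (j:ℕ) = n then z ^ (((n+1:ℕ):ℤ) * ((s:ℤ) - ((n+1:ℕ):ℤ))) else 0)) :=
        Finset.sum_congr rfl (fun j _ => key j)
    _ = (∑ j : Fin (n+1), (if (j:ℕ) = 0 then z ^ (((n+1:ℕ):ℤ) * ((s:ℤ) - ((n+1:ℕ):ℤ))) else 0))
          - ∑ j : Fin (n+1), (if (j:ℕ) = n then z ^ (((n+1:ℕ):ℤ) * ((s:ℤ) - ((n+1:ℕ):ℤ))) else 0) :=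
        Finset.sum_sub_distrib _ _
    _ = 0 := by
        have h1 : (∑ j : Fin (n+1),
            (if (j:ℕ) = 0 then z ^ (((n+1:ℕ):ℤ) * ((s:ℤ) - ((n+1:ℕ):ℤ))) else 0))
            = z ^ (((n+1:ℕ):ℤ) * ((s:ℤ) - ((n+1:ℕ):ℤ))) := by
          rw [Finset.sum_eq_single (0 : Fin (n+1))]
          · simp
          · intro b _ hb
            rw [if_neg (fun h => hb (Fin.ext (by simp [h])))]
          · intro h
            exact absurd (Finset.mem_univ _) h
        have h2 : (∑ j : Fin (n+1),
            (if (j:ℕ) = n then z ^ (((n+1:ℕ):ℤ) * ((s:ℤ) - ((n+1:ℕ):ℤ))) else 0))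
            = z ^ (((n+1:ℕ):ℤ) * ((s:ℤ) - ((n+1:ℕ):ℤ))) := by
          rw [Finset.sum_eq_single (Fin.last n)]
          · simp
          · intro b _ hb
            rw [if_neg (fun h => hb (Fin.ext (by simp [h])))]
          · intro h
            exact absurd (Finset.mem_univ _) h
        rw [h1, h2, sub_self]
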